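/- arXiv:2011.14958 — 5 statements merged into one kernel-verified Lean document; each statement's English description precedes it below -/
import Mathlib

section
/- Let n ≥ 1, let q* ∈ ℝⁿ, and let V, V_d : ℝⁿ → ℝ be twice continuously differentiable. Let M, M_d : ℝⁿ → Mat_{n×n}(ℝ) be continuous maps taking values in the symmetric positive definite matrices, and let ℓ : ℝⁿ → ℝⁿ be continuous with ℓ(q*) ≠ 0, such that the map q ↦ M(q)⁻¹ M_d(q) ℓ(q) is differentiable at q*. Assume: (i) the matching equation ℓ(q)ᵀ ∇V(q) = ℓ(q)ᵀ M_d(q) M(q)⁻¹ ∇V_d(q) holds for all q ∈ ℝⁿ; (ii) ∇V_d(q*) = 0; (iii) the Hessian matrix of V_d at q* is positive definite. Then, writing h(q) = ℓ(q)ᵀ ∇V(q) (which is differentiable at q*), the number ℓ(q*)ᵀ M_d(q*) M(q*)⁻¹ ∇h(q*) is strictly positive. -/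
open Matrix

/-- Euclidean gradient of a scalar function on `ℝⁿ`. -/
noncomputable def grad {n : ℕ} (f : (Fin n → ℝ) → ℝ) (q : Fin n → ℝ) : Fin n → ℝ :=
  fun i => fderiv ℝ f q (Pi.single i 1)

/-- Hessian matrix of a scalar function on `ℝⁿ`. -/
noncomputable def hess {n : ℕ} (f : (Fin n → ℝ) → ℝ) (q : Fin n → ℝ) :
    Matrix (Fin n) (Fin n) ℝ :=
  fun i j => fderiv ℝ (fun x => fderiv ℝ f x (Pi.single j 1)) q (Pi.single i 1)

/-- Proposition 1: necessary condition for kinetic-energy shaping in IDA-PBC. -/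
theorem necessary_condition_IDA_PBC {n : ℕ} (hn : 1 ≤ n) (qs : Fin n → ℝ)
    (V Vd : (Fin n → ℝ) → ℝ) (hV : ContDiff ℝ 2 V) (hVd : ContDiff ℝ 2 Vd)
    (M Md : (Fin n → ℝ) → Matrix (Fin n) (Fin n) ℝ)
    (hMc : Continuous M) (hMdc : Continuous Md)
    (hMpd : ∀ q, (M q).PosDef) (hMdpd : ∀ q, (Md q).PosDef)
    (ℓ : (Fin n → ℝ) → (Fin n → ℝ)) (hℓc : Continuous ℓ) (hℓ0 : ℓ qs ≠ 0)
    (hdiff : DifferentiableAt ℝ (fun q => (M q)⁻¹ *ᵥ (Md q *ᵥ ℓ q)) qs)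
    (hmatch : ∀ q, ℓ q ⬝ᵥ grad V q = ℓ q ⬝ᵥ ((Md q * (M q)⁻¹) *ᵥ grad Vd q))
    (hcrit : grad Vd qs = 0)
    (hhess : (hess Vd qs).PosDef) :
    DifferentiableAt ℝ (fun q => ℓ q ⬝ᵥ grad V q) qs ∧
    0 < ℓ qs ⬝ᵥ ((Md qs * (M qs)⁻¹) *ᵥ grad (fun q => ℓ q ⬝ᵥ grad V q) qs) := by
  classical
  set w : (Fin n → ℝ) → (Fin n → ℝ) := fun q => (M q)⁻¹ *ᵥ (Md q *ᵥ ℓ q) with hw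
  -- symmetry of M, Md
  have hMsym : ∀ q, (M q)ᵀ = M q := fun q => by
    have := (hMpd q).isHermitian
    simpa [Matrix.IsHermitian, Matrix.conjTranspose_eq_transpose_of_trivial] using this
  have hMdsym : ∀ q, (Md q)ᵀ = Md q := fun q => by
    have := (hMdpd q).isHermitian
    simpa [Matrix.IsHermitian, Matrix.conjTranspose_eq_transpose_of_trivial] using this
  -- rewrite the quadratic pairing with w
  have key : ∀ q (x : Fin n → ℝ), ℓ q ⬝ᵥ ((Md q * (M q)⁻¹) *ᵥ x) = w q ⬝ᵥ x := by
    intro q x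
    rw [Matrix.dotProduct_mulVec, ← Matrix.mulVec_transpose]
    congr 1
    rw [Matrix.transpose_mul, Matrix.transpose_nonsing_inv, hMsym q, hMdsym q,
      hw]
    simp [Matrix.mulVec_mulVec]
  -- `grad Vd` is differentiable at qs (each component)
  have hgd : ∀ i, DifferentiableAt ℝ (fun x => fderiv ℝ Vd x (Pi.single i 1)) qs := by
    intro i
    have h1 : ContDiff ℝ 1 (fderiv ℝ Vd) := hVd.fderiv_right (by norm_num)
    have h2 : Differentiable ℝ (fderiv ℝ Vd) := h1.differentiable one_ne_zero
    exact ((ContinuousLinearMap.apply ℝ ℝ (Pi.single i 1)).differentiable.comp h2) qs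
  -- h = fun q => ∑ i, w q i * grad Vd q i
  have hform : (fun q => ℓ q ⬝ᵥ grad V q) = fun q => ∑ i, w q i * grad Vd q i := by
    funext q
    rw [hmatch q, key q]
    rfl
  have hwdiff : ∀ i, DifferentiableAt ℝ (fun q => w q i) qs := by
    intro i
    exact (differentiableAt_pi.1 hdiff) i
  -- differentiability of h
  have hHD : ∀ i, HasFDerivAt (fun q => w q i * grad Vd q i)
      ((w qs i) • fderiv ℝ (fun x => fderiv ℝ Vd x (Pi.single i 1)) qs) qs := by
    intro i
    have h1 := (hwdiff i).hasFDerivAt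
    have h2 := (hgd i).hasFDerivAt
    have := h1.mul h2
    have hz : fderiv ℝ Vd qs (Pi.single i 1) = 0 := congrFun hcrit i
    simpa [grad, hz, zero_smul, Pi.mul_def] using this
  have hsum : HasFDerivAt (fun q => ∑ i, w q i * grad Vd q i)
      (∑ i, (w qs i) • fderiv ℝ (fun x => fderiv ℝ Vd x (Pi.single i 1)) qs) qs :=
    HasFDerivAt.fun_sum fun i _ => hHD i
  have hdiffh : DifferentiableAt ℝ (fun q => ℓ q ⬝ᵥ grad V q) qs := by
    rw [hform]; exact hsum.differentiableAt
  refine ⟨hdiffh, ?_⟩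
  -- compute the gradient of h at qs
  have hgradh : grad (fun q => ℓ q ⬝ᵥ grad V q) qs = (hess Vd qs) *ᵥ (w qs) := by
    funext j
    have : fderiv ℝ (fun q => ℓ q ⬝ᵥ grad V q) qs =
        ∑ i, (w qs i) • fderiv ℝ (fun x => fderiv ℝ Vd x (Pi.single i 1)) qs := by
      rw [hform]; exact hsum.fderiv
    rw [grad, this]
    simp only [ContinuousLinearMap.sum_apply, ContinuousLinearMap.smul_apply,
      smul_eq_mul]
    rw [Matrix.mulVec]
    simp only [dotProduct, hess]
    exact Finset.sum_congr rfl fun i _ => mul_comm _ _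
  rw [hgradh, key qs]
  -- w qs ≠ 0
  have hwne : w qs ≠ 0 := by
    intro h0
    have hMl : Md qs *ᵥ ℓ qs = 0 := by
      have hdet : IsUnit (M qs).det := (hMpd qs).isUnit.map (Matrix.detMonoidHom)
      have : M qs *ᵥ (w qs) = Md qs *ᵥ ℓ qs := by
        rw [hw]
        simp only [Matrix.mulVec_mulVec]
        rw [← Matrix.mul_assoc, Matrix.mul_nonsing_inv _ hdet, Matrix.one_mul]
      rw [h0, Matrix.mulVec_zero] at this
      exact this.symm
    have := (hMdpd qs).dotProduct_mulVec_pos hℓ0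
    rw [hMl] at this
    simp at this
  have := hhess.dotProduct_mulVec_pos hwne
  simpa using this
end

section
/- Let n ≥ 2, m = n − 1, and fix q, p ∈ ℝⁿ. Let M, M_d : ℝⁿ → Mat_{n×n}(ℝ) be differentiable maps taking symmetric positive definite values, let V, V_d : ℝⁿ → ℝ be differentiable, and define H(q,p) = ½ pᵀM(q)⁻¹p + V(q) and H_d(q,p) = ½ pᵀM_d(q)⁻¹p + V_d(q). Let G(q) be an n×m matrix of rank m, let w ∈ ℝⁿ be nonzero with G(q)ᵀw = 0, let J₂ be any real n×n matrix, and let K_v be any real m×m matrix. Suppose the matching condition wᵀ( ∇_q H(q,p) − M_d(q)M(q)⁻¹ ∇_q H_d(q,p) + J₂ M_d(q)⁻¹ p ) = 0 holds. Define u = u_es + u_di with u_es = (GᵀG)⁻¹Gᵀ( ∇_q H − M_d M⁻¹ ∇_q H_d + J₂ M_d⁻¹ p ) and u_di = −K_v Gᵀ ∇_p H_d, all evaluated at (q,p). Then: (a) ∇_p H(q,p) = M(q)⁻¹M_d(q) ∇_p H_d(q,p), and (b) −∇_q H(q,p) + G(q) u = −M_d(q)M(q)⁻¹ ∇_q H_d(q,p)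 + ( J₂ − G(q) K_v G(q)ᵀ ) ∇_p H_d(q,p). -/
open Matrix

lemma grad_half_quadratic {n : ℕ} (A : Matrix (Fin n) (Fin n) ℝ) (hA : Aᵀ = A) (c : ℝ)
    (p : Fin n → ℝ) :
    grad (fun y => (1 / 2 : ℝ) * (y ⬝ᵥ (A *ᵥ y)) + c) p = A *ᵥ p := by
  have hq : ∀ y : Fin n → ℝ, y ⬝ᵥ (A *ᵥ y) = ∑ i, ∑ j, y i * (A i j * y j) := by
    intro y; simp [dotProduct, mulVec, Finset.mul_sum]
  set L : (Fin n → ℝ) →L[ℝ] ℝ := ∑ i, ∑ j,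
    (p i • ((A i j) • (ContinuousLinearMap.proj j : (Fin n → ℝ) →L[ℝ] ℝ))
      + (A i j * p j) • (ContinuousLinearMap.proj i : (Fin n → ℝ) →L[ℝ] ℝ)) with hL
  have hterm : ∀ i j : Fin n, HasFDerivAt (fun y : Fin n → ℝ => y i * (A i j * y j))
      (p i • ((A i j) • (ContinuousLinearMap.proj j : (Fin n → ℝ) →L[ℝ] ℝ))
        + (A i j * p j) • (ContinuousLinearMap.proj i : (Fin n → ℝ) →L[ℝ] ℝ)) p := by
    intro i j
    exact ((ContinuousLinearMap.proj i : (Fin n → ℝ) →L[ℝ] ℝ).hasFDerivAt (x := p)).mul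
      (((ContinuousLinearMap.proj j : (Fin n → ℝ) →L[ℝ] ℝ).hasFDerivAt (x := p)).const_mul (A i j))
  have hquad : HasFDerivAt (fun y : Fin n → ℝ => ∑ i, ∑ j, y i * (A i j * y j)) L p :=
    HasFDerivAt.fun_sum (fun i _ => HasFDerivAt.fun_sum (fun j _ => hterm i j))
  have hf : HasFDerivAt (fun y : Fin n → ℝ => (1 / 2 : ℝ) * (y ⬝ᵥ (A *ᵥ y)) + c)
      ((1 / 2 : ℝ) • L) p := by
    simp only [hq]
    exact (hquad.const_mul _).add_const c
  funext k
  rw [grad, hf.fderiv]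
  simp only [hL, ContinuousLinearMap.smul_apply, ContinuousLinearMap.sum_apply,
    ContinuousLinearMap.add_apply, ContinuousLinearMap.proj_apply, Pi.single_apply,
    mul_ite, mul_one, mul_zero, ite_mul, zero_mul, smul_eq_mul]
  simp only [Finset.sum_add_distrib]
  simp only [Finset.sum_ite_eq', Finset.mem_univ, if_true]
  rw [Finset.sum_comm]
  simp only [Finset.sum_ite_eq', Finset.mem_univ, if_true]
  have hsymm : ∀ x, A x k = A k x := fun x => (congrFun (congrFun hA x) k).symm
  simp only [mulVec, dotProduct]
  rw [Finset.sum_congr rfl (fun x _ => by rw [hsymm x, mul_comm])]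
  ring

/-- Pointwise algebraic identity behind IDA-PBC for underactuated mechanical systems
with one degree of underactuation. -/
theorem IDA_PBC_closed_loop {n m : ℕ} (hn : 2 ≤ n) (hm : m = n - 1)
    (q p : Fin n → ℝ)
    (M Md : (Fin n → ℝ) → Matrix (Fin n) (Fin n) ℝ)
    (hMdiff : ∀ i j, Differentiable ℝ (fun x => M x i j))
    (hMddiff : ∀ i j, Differentiable ℝ (fun x => Md x i j))
    (hMpd : ∀ x, (M x).PosDef) (hMdpd : ∀ x, (Md x).PosDef)
    (V Vd : (Fin n → ℝ) → ℝ) (hV : Differentiable ℝ V) (hVd : Differentiable ℝ Vd)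
    (H Hd : (Fin n → ℝ) → (Fin n → ℝ) → ℝ)
    (hH : H = fun x y => (1 / 2 : ℝ) * (y ⬝ᵥ ((M x)⁻¹ *ᵥ y)) + V x)
    (hHd : Hd = fun x y => (1 / 2 : ℝ) * (y ⬝ᵥ ((Md x)⁻¹ *ᵥ y)) + Vd x)
    (G : Matrix (Fin n) (Fin m) ℝ) (hG : G.rank = m)
    (w : Fin n → ℝ) (hw : w ≠ 0) (hannih : Gᵀ *ᵥ w = 0)
    (J₂ : Matrix (Fin n) (Fin n) ℝ) (Kv : Matrix (Fin m) (Fin m) ℝ)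
    (hmatch : w ⬝ᵥ (grad (fun x => H x p) q
        - (Md q * (M q)⁻¹) *ᵥ grad (fun x => Hd x p) q
        + J₂ *ᵥ ((Md q)⁻¹ *ᵥ p)) = 0)
    (u_es u_di u : Fin m → ℝ)
    (hu_es : u_es = (Gᵀ * G)⁻¹ *ᵥ (Gᵀ *ᵥ (grad (fun x => H x p) q
        - (Md q * (M q)⁻¹) *ᵥ grad (fun x => Hd x p) q
        + J₂ *ᵥ ((Md q)⁻¹ *ᵥ p))))
    (hu_di : u_di = -(Kv *ᵥ (Gᵀ *ᵥ grad (fun y => Hd q y) p)))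
    (hu : u = u_es + u_di) :
    grad (fun y => H q y) p = ((M q)⁻¹ * Md q) *ᵥ grad (fun y => Hd q y) p ∧
    -grad (fun x => H x p) q + G *ᵥ u
      = -((Md q * (M q)⁻¹) *ᵥ grad (fun x => Hd x p) q)
        + (J₂ - G * Kv * Gᵀ) *ᵥ grad (fun y => Hd q y) p := by
  have hMsym : ((M q)⁻¹)ᵀ = (M q)⁻¹ := by
    have h := (hMpd q).1.inv
    rwa [Matrix.IsHermitian, conjTranspose_eq_transpose_of_trivial] at h
  have hMdsym : ((Md q)⁻¹)ᵀ = (Md q)⁻¹ := by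
    have h := (hMdpd q).1.inv
    rwa [Matrix.IsHermitian, conjTranspose_eq_transpose_of_trivial] at h
  have hgp : grad (fun y => H q y) p = (M q)⁻¹ *ᵥ p := by
    simp only [hH]; exact grad_half_quadratic _ hMsym _ p
  have hgdp : grad (fun y => Hd q y) p = (Md q)⁻¹ *ᵥ p := by
    simp only [hHd]; exact grad_half_quadratic _ hMdsym _ p
  have hMddet : IsUnit (Md q).det := (hMdpd q).det_pos.ne'.isUnit
  constructor
  · rw [hgp, hgdp, mulVec_mulVec, mul_assoc, mul_nonsing_inv _ hMddet, mul_one]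
  -- part (b)
  set g1 := grad (fun x => H x p) q with hg1
  set g2 := grad (fun x => Hd x p) q with hg2
  set s := g1 - (Md q * (M q)⁻¹) *ᵥ g2 + J₂ *ᵥ ((Md q)⁻¹ *ᵥ p) with hs_def
  -- s is in the column space of G
  have hsmem : s ∈ LinearMap.range G.mulVecLin := by
    by_contra hs
    set U := LinearMap.range G.mulVecLin with hU_def
    have hU : Module.finrank ℝ U = m := hG
    have hs0 : s ≠ 0 := fun h => hs (h ▸ Submodule.zero_mem _)
    have hinf : U ⊓ (ℝ ∙ s) = ⊥ := by
      rw [eq_bot_iff]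
      rintro x ⟨hxU, hxs⟩
      obtain ⟨c, rfl⟩ := Submodule.mem_span_singleton.mp hxs
      rcases eq_or_ne c 0 with rfl | hc
      · simp
      · exact absurd (by simpa [smul_smul, inv_mul_cancel₀ hc] using U.smul_mem c⁻¹ hxU) hs
    have hfin := Submodule.finrank_sup_add_finrank_inf_eq U (ℝ ∙ s)
    rw [hinf, finrank_bot, finrank_span_singleton hs0, hU] at hfin
    have htop : U ⊔ (ℝ ∙ s) = ⊤ := by
      apply Submodule.eq_top_of_finrank_eq
      rw [Module.finrank_fintype_fun_eq_card, Fintype.card_fin]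
      omega
    have hw2 : w ∈ U ⊔ (ℝ ∙ s) := htop ▸ Submodule.mem_top
    obtain ⟨a, haU, b, hbs, hab⟩ := Submodule.mem_sup.mp hw2
    obtain ⟨x, rfl⟩ := haU
    obtain ⟨c, rfl⟩ := Submodule.mem_span_singleton.mp hbs
    have hWG : w ⬝ᵥ (G *ᵥ x) = 0 := by
      rw [dotProduct_mulVec, ← mulVec_transpose, hannih, zero_dotProduct]
    have : w ⬝ᵥ w = 0 := by
      calc w ⬝ᵥ w = w ⬝ᵥ (G.mulVecLin x + c • s) := by rw [hab]
        _ = 0 := by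
            simp only [mulVecLin_apply, dotProduct_add, dotProduct_smul, smul_eq_mul, hWG, hmatch]
            ring
    exact hw (dotProduct_self_eq_zero.mp this)
  obtain ⟨t, ht⟩ := hsmem
  have hGtG : IsUnit (Gᵀ * G).det := by
    rw [← isUnit_iff_isUnit_det]
    have hr : Module.finrank ℝ (LinearMap.range (Gᵀ * G).mulVecLin) = m := by
      have := rank_transpose_mul_self G
      rw [hG] at this
      exact this
    have htop : LinearMap.range (Gᵀ * G).mulVecLin = ⊤ :=
      Submodule.eq_top_of_finrank_eq
        (by rw [hr, Module.finrank_fintype_fun_eq_card, Fintype.card_fin])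
    rw [← mulVec_surjective_iff_isUnit]
    intro y
    obtain ⟨x, hx⟩ := LinearMap.range_eq_top.mp htop y
    exact ⟨x, hx⟩
  have hGu_es : G *ᵥ u_es = s := by
    rw [hu_es, ← ht, mulVecLin_apply, mulVec_mulVec, mulVec_mulVec, mulVec_mulVec,
      Matrix.mul_assoc (G * (Gᵀ * G)⁻¹), Matrix.mul_assoc G, nonsing_inv_mul _ hGtG, Matrix.mul_one]
  rw [hu, mulVec_add, hGu_es, hu_di, hgdp, hs_def]
  rw [mulVec_neg, sub_mulVec]
  simp only [← Matrix.mulVec_mulVec]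
  abel
end

section
/- Consider the VTOL aircraft with configuration q = (x, y, θ) ∈ ℝ³, inertia matrix M = I₃, potential energy V(q) = g·y with g > 0, and ε > 0. Let q* = (x*, y*, 0). Then there is no twice continuously differentiable function V_d : ℝ³ → ℝ satisfying all of: (i) the potential-energy matching PDE with M_d = I₃, namely cos θ · ∂V_d/∂x + sin θ · ∂V_d/∂y − ε · ∂V_d/∂θ = g sin θ for all (x, y, θ); (ii) ∇V_d(q*) = 0; (iii) the Hessian matrix of V_d at q* is positive definite. -/
open Matrix

set_option maxHeartbeats 1600000 in
/-- The VTOL aircraft cannot be stabilized by potential-energy shaping alone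
(`M_d = I₃` violates the necessary condition of Proposition 1). -/
theorem VTOL_no_potential_shaping (g ε : ℝ) (hg : 0 < g) (hε : 0 < ε) (xs ys : ℝ) :
    ¬ ∃ Vd : (Fin 3 → ℝ) → ℝ, ContDiff ℝ 2 Vd ∧
      (∀ q : Fin 3 → ℝ,
        Real.cos (q 2) * grad Vd q 0 + Real.sin (q 2) * grad Vd q 1
          - ε * grad Vd q 2 = g * Real.sin (q 2)) ∧
      grad Vd ![xs, ys, 0] = 0 ∧
      (hess Vd ![xs, ys, 0]).PosDef := by
  rintro ⟨Vd, hC2, hPDE, hgrad, hpos⟩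
  set qs : Fin 3 → ℝ := ![xs, ys, 0] with hqs
  set e : Fin 3 → (Fin 3 → ℝ) := fun d => Pi.single d 1 with he
  have hdiff : Differentiable ℝ Vd := hC2.differentiable (by norm_num)
  have hf'C1 : ContDiff ℝ 1 (fderiv ℝ Vd) := hC2.fderiv_right (by norm_num)
  have hf'diff : Differentiable ℝ (fderiv ℝ Vd) := hf'C1.differentiable one_ne_zero
  set f'' := fderiv ℝ (fderiv ℝ Vd) qs with hf''def
  have hf'' : HasFDerivAt (fderiv ℝ Vd) f'' qs := (hf'diff qs).hasFDerivAt
  -- derivative of the partial-derivative functions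
  have hgd : ∀ i : Fin 3, HasFDerivAt (fun x => fderiv ℝ Vd x (e i))
      ((ContinuousLinearMap.apply ℝ ℝ (e i)).comp f'') qs := by
    intro i
    exact (ContinuousLinearMap.apply ℝ ℝ (e i)).hasFDerivAt.comp qs hf''
  have hhess : ∀ i j : Fin 3, hess Vd qs i j = f'' (e i) (e j) := by
    intro i j
    have h := (hgd j).fderiv
    have : hess Vd qs i j = fderiv ℝ (fun x => fderiv ℝ Vd x (e j)) qs (e i) := rfl
    rw [this, h]; rfl
  -- symmetry of the Hessian
  have hsymm : ∀ v w, f'' v w = f'' w v :=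
    second_derivative_symmetric (fun y => (hdiff y).hasFDerivAt) hf''
  have hqs2 : qs 2 = 0 := by simp [hqs]
  have hcurve : ∀ d i : Fin 3, HasDerivAt
      (fun t : ℝ => fderiv ℝ Vd (qs + t • e d) (e i)) (f'' (e d) (e i)) 0 := by
    intro d i
    have hc : HasDerivAt (fun t : ℝ => qs + t • e d) (e d) 0 := by
      simpa using ((hasDerivAt_id (0:ℝ)).smul_const (e d)).const_add qs
    have h0 : qs + (0:ℝ) • e d = qs := by simp
    have h := (h0 ▸ hgd i).comp_hasDerivAt 0 hc
    exact h
  have hgrad' : ∀ i : Fin 3, fderiv ℝ Vd qs (e i) = 0 := by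
    intro i
    have := congrFun hgrad i
    simpa [grad, he] using this
  -- differentiate PDE along e0 at qs
  have hd0 : f'' (e 0) (e 0) - ε * f'' (e 0) (e 2) = 0 := by
    have heq : (fun t : ℝ => fderiv ℝ Vd (qs + t • e 0) (e 0)
        - ε * fderiv ℝ Vd (qs + t • e 0) (e 2)) = fun _ : ℝ => (0:ℝ) := by
      funext t
      have h2 : (qs + t • e 0) 2 = 0 := by
        simp [hqs, he, Pi.single_eq_of_ne (by decide : (2:Fin 3) ≠ 0)]
      have h := hPDE (qs + t • e 0)
      simp only [grad, h2, Real.cos_zero, Real.sin_zero] at h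
      rw [show (Pi.single (0:Fin 3) (1:ℝ)) = e 0 from rfl,
        show (Pi.single (2:Fin 3) (1:ℝ)) = e 2 from rfl] at h
      linarith
    have h1 : HasDerivAt (fun t : ℝ => fderiv ℝ Vd (qs + t • e 0) (e 0)
        - ε * fderiv ℝ Vd (qs + t • e 0) (e 2))
        (f'' (e 0) (e 0) - ε * f'' (e 0) (e 2)) 0 :=
      (hcurve 0 0).sub ((hcurve 0 2).const_mul ε)
    have h2 : HasDerivAt (fun t : ℝ => fderiv ℝ Vd (qs + t • e 0) (e 0)
        - ε * fderiv ℝ Vd (qs + t • e 0) (e 2)) 0 0 := by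
      rw [heq]; exact hasDerivAt_const 0 0
    exact h1.unique h2
  -- differentiate PDE along e2 at qs
  have hd2 : f'' (e 2) (e 0) - ε * f'' (e 2) (e 2) = g := by
    have h2t : ∀ t : ℝ, (qs + t • e 2) 2 = t := by
      intro t; simp [hqs, he]
    have hcos : HasDerivAt (fun t : ℝ => Real.cos ((qs + t • e 2) 2)) (-Real.sin 0) 0 := by
      have : (fun t : ℝ => Real.cos ((qs + t • e 2) 2)) = Real.cos := by
        funext t; rw [h2t]
      rw [this]; exact Real.hasDerivAt_cos 0
    have hsin : HasDerivAt (fun t : ℝ => Real.sin ((qs + t • e 2) 2)) (Real.cos 0) 0 := by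
      have : (fun t : ℝ => Real.sin ((qs + t • e 2) 2)) = Real.sin := by
        funext t; rw [h2t]
      rw [this]; exact Real.hasDerivAt_sin 0
    have h00 : qs + (0:ℝ) • e 2 = qs := by simp
    have h1 := ((hcos.mul (hcurve 2 0)).add (hsin.mul (hcurve 2 1))).sub
      ((hcurve 2 2).const_mul ε)
    rw [h00] at h1
    have h2 : HasDerivAt (fun t : ℝ => g * Real.sin ((qs + t • e 2) 2)) (g * Real.cos 0) 0 := by
      have : (fun t : ℝ => g * Real.sin ((qs + t • e 2) 2)) = fun t => g * Real.sin t := by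
        funext t; rw [h2t]
      rw [this]; exact (Real.hasDerivAt_sin 0).const_mul g
    have heq : (fun t : ℝ => Real.cos ((qs + t • e 2) 2) * fderiv ℝ Vd (qs + t • e 2) (e 0)
        + Real.sin ((qs + t • e 2) 2) * fderiv ℝ Vd (qs + t • e 2) (e 1)
        - ε * fderiv ℝ Vd (qs + t • e 2) (e 2))
        = fun t : ℝ => g * Real.sin ((qs + t • e 2) 2) := by
      funext t
      have h := hPDE (qs + t • e 2)
      simpa [grad, he] using h
    have h2' : HasDerivAt (fun t : ℝ =>
        Real.cos ((qs + t • e 2) 2) * fderiv ℝ Vd (qs + t • e 2) (e 0)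
        + Real.sin ((qs + t • e 2) 2) * fderiv ℝ Vd (qs + t • e 2) (e 1)
        - ε * fderiv ℝ Vd (qs + t • e 2) (e 2)) (g * Real.cos 0) 0 := by
      rw [heq]; exact h2
    have hval := h1.unique h2'
    rw [hgrad' 0, hgrad' 1] at hval
    simp [hqs2] at hval
    linarith
  -- algebra
  set A := f'' (e 0) (e 0) with hA
  set B := f'' (e 0) (e 2) with hB
  set C := f'' (e 2) (e 2) with hC
  rw [hsymm (e 2) (e 0), ← hB] at hd2
  have hApos : 0 < A := by
    have hne : e 0 ≠ 0 := by
      intro h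
      have := congrFun h 0
      simp [he] at this
    have h := hpos.dotProduct_mulVec_pos (x := e 0) hne
    have hdp : dotProduct (star (e 0)) (hess Vd qs *ᵥ e 0)
        = hess Vd qs 0 0 := by
      simp [he, dotProduct, mulVec, Fin.sum_univ_three, Pi.single_apply]
    rw [hdp, hhess 0 0] at h
    exact h
  have hBpos : 0 < B := by nlinarith
  have hwne : (![B, 0, -A] : Fin 3 → ℝ) ≠ 0 := by
    intro h
    have := congrFun h 0
    simp at this
    exact absurd this (ne_of_gt hBpos)
  have hw := hpos.dotProduct_mulVec_pos (x := ![B, 0, -A]) hwne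
  have hquad : dotProduct (star (![B, 0, -A] : Fin 3 → ℝ)) (hess Vd qs *ᵥ ![B, 0, -A])
      = B * (B * hess Vd qs 0 0 + (-A) * hess Vd qs 0 2)
        + (-A) * (B * hess Vd qs 2 0 + (-A) * hess Vd qs 2 2) := by
    simp [dotProduct, mulVec, Fin.sum_univ_three]
    ring
  rw [hquad, hhess 0 0, hhess 0 2, hhess 2 0, hhess 2 2, hsymm (e 2) (e 0),
    ← hA, ← hB, ← hC] at hw
  have h1 : A * C - B * B = B * (-g) := by
    have hA' : A = ε * B := by linarith
    have hB' : ε * C - B = -g := by linarith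
    calc A * C - B * B = B * (ε * C - B) := by rw [hA']; ring
      _ = B * (-g) := by rw [hB']
  have h2 : B * (B * A + -A * B) + -A * (B * B + -A * C) = A * (A * C - B * B) := by ring
  rw [h2, h1] at hw
  nlinarith [mul_pos hApos hBpos]
end

section
/- Let m, M, l₃ be positive real numbers and set c = m·l₃/(M + m). Let φ : ℝ² → ℝ be differentiable and define a : ℝ³ → ℝ by a(x, y, θ) = φ( x + c·sin θ, y − c·cos θ ). Then a is differentiable and satisfies the first-order linear PDE −m l₃ cos θ · ∂a/∂x − m l₃ sin θ · ∂a/∂y + (M + m) · ∂a/∂θ = 0 for all (x, y, θ) ∈ ℝ³. -/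
/-- The Pfaffian/characteristic solution of the remaining kinetic-energy matching PDE
for the 2D SpiderCrane system. -/
theorem spiderCrane_kinetic_PDE_solution (m M l₃ : ℝ)
    (hm : 0 < m) (hM : 0 < M) (hl : 0 < l₃)
    (c : ℝ) (hc : c = m * l₃ / (M + m))
    (φ : ℝ × ℝ → ℝ) (hφ : Differentiable ℝ φ)
    (a : (Fin 3 → ℝ) → ℝ)
    (ha : a = fun q => φ (q 0 + c * Real.sin (q 2), q 1 - c * Real.cos (q 2))) :
    Differentiable ℝ a ∧
    ∀ q : Fin 3 → ℝ,
      -(m * l₃ * Real.cos (q 2)) * grad a q 0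
        - m * l₃ * Real.sin (q 2) * grad a q 1
        + (M + m) * grad a q 2 = 0 := by
  subst ha
  set g : (Fin 3 → ℝ) → ℝ × ℝ :=
    fun q => (q 0 + c * Real.sin (q 2), q 1 - c * Real.cos (q 2)) with hgdef
  have hproj : ∀ (i : Fin 3) (q : Fin 3 → ℝ), HasFDerivAt (fun q : Fin 3 → ℝ => q i)
      (ContinuousLinearMap.proj i : (Fin 3 → ℝ) →L[ℝ] ℝ) q := by
    intro i q
    exact (ContinuousLinearMap.proj (R := ℝ) (φ := fun _ : Fin 3 => ℝ) i).hasFDerivAt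
  have hg : ∀ q : Fin 3 → ℝ, HasFDerivAt g
      ((((ContinuousLinearMap.proj 0 : (Fin 3 → ℝ) →L[ℝ] ℝ)
          + (c * Real.cos (q 2)) • ContinuousLinearMap.proj 2).prod
        ((ContinuousLinearMap.proj 1 : (Fin 3 → ℝ) →L[ℝ] ℝ)
          + (c * Real.sin (q 2)) • ContinuousLinearMap.proj 2))) q := by
    intro q
    have h0 : HasFDerivAt (fun q : Fin 3 → ℝ => q 0)
        (ContinuousLinearMap.proj 0 : (Fin 3 → ℝ) →L[ℝ] ℝ) q :=
      hproj 0 q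
    have h1 : HasFDerivAt (fun q : Fin 3 → ℝ => q 1)
        (ContinuousLinearMap.proj 1 : (Fin 3 → ℝ) →L[ℝ] ℝ) q :=
      hproj 1 q
    have h2 : HasFDerivAt (fun q : Fin 3 → ℝ => q 2)
        (ContinuousLinearMap.proj 2 : (Fin 3 → ℝ) →L[ℝ] ℝ) q :=
      hproj 2 q
    have hsin : HasFDerivAt (fun q : Fin 3 → ℝ => Real.sin (q 2))
        (Real.cos (q 2) • (ContinuousLinearMap.proj 2 : (Fin 3 → ℝ) →L[ℝ] ℝ)) q :=
      by have h := (Real.hasDerivAt_sin (q 2)).comp_hasFDerivAt q h2; exact h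
    have hcos : HasFDerivAt (fun q : Fin 3 → ℝ => Real.cos (q 2))
        ((-Real.sin (q 2)) • (ContinuousLinearMap.proj 2 : (Fin 3 → ℝ) →L[ℝ] ℝ)) q :=
      by have h := (Real.hasDerivAt_cos (q 2)).comp_hasFDerivAt q h2; exact h
    have hA : HasFDerivAt (fun q : Fin 3 → ℝ => q 0 + c * Real.sin (q 2))
        ((ContinuousLinearMap.proj 0 : (Fin 3 → ℝ) →L[ℝ] ℝ)
          + (c * Real.cos (q 2)) • ContinuousLinearMap.proj 2) q := by
      have := h0.add (hsin.const_mul c)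
      rw [smul_smul] at this
      exact this
    have hB : HasFDerivAt (fun q : Fin 3 → ℝ => q 1 - c * Real.cos (q 2))
        ((ContinuousLinearMap.proj 1 : (Fin 3 → ℝ) →L[ℝ] ℝ)
          + (c * Real.sin (q 2)) • ContinuousLinearMap.proj 2) q := by
      have := h1.sub (hcos.const_mul c)
      rw [smul_smul] at this
      have e : (ContinuousLinearMap.proj 1 : (Fin 3 → ℝ) →L[ℝ] ℝ)
          - (c * -Real.sin (q 2)) • ContinuousLinearMap.proj 2
          = ContinuousLinearMap.proj 1 + (c * Real.sin (q 2)) • ContinuousLinearMap.proj 2 := by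
        refine ContinuousLinearMap.ext fun v => ?_
        simp only [ContinuousLinearMap.sub_apply, ContinuousLinearMap.add_apply,
          ContinuousLinearMap.smul_apply, ContinuousLinearMap.proj_apply, smul_eq_mul]
        ring
      rw [e] at this
      exact this
    exact hA.prodMk hB
  have ha' : ∀ q : Fin 3 → ℝ, HasFDerivAt (fun q => φ (g q))
      ((fderiv ℝ φ (g q)).comp
        ((((ContinuousLinearMap.proj 0 : (Fin 3 → ℝ) →L[ℝ] ℝ)
            + (c * Real.cos (q 2)) • ContinuousLinearMap.proj 2).prod
          ((ContinuousLinearMap.proj 1 : (Fin 3 → ℝ) →L[ℝ] ℝ)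
            + (c * Real.sin (q 2)) • ContinuousLinearMap.proj 2)))) q :=
    fun q => ((hφ (g q)).hasFDerivAt).comp q (hg q)
  constructor
  · exact fun q => (ha' q).differentiableAt
  · intro q
    have hgr : ∀ i : Fin 3, grad (fun q => φ (g q)) q i
        = (fderiv ℝ φ (g q))
            ((Pi.single i 1 : Fin 3 → ℝ) 0 + c * Real.cos (q 2) * (Pi.single i 1 : Fin 3 → ℝ) 2,
             (Pi.single i 1 : Fin 3 → ℝ) 1 + c * Real.sin (q 2) * (Pi.single i 1 : Fin 3 → ℝ) 2) := by
      intro i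
      simp only [grad, (ha' q).fderiv]
      simp [ContinuousLinearMap.comp_apply, ContinuousLinearMap.prod_apply,
        ContinuousLinearMap.add_apply, ContinuousLinearMap.smul_apply,
        ContinuousLinearMap.proj_apply, smul_eq_mul]
    have e0 := hgr 0
    have e1 := hgr 1
    have e2 := hgr 2
    simp only [Pi.single_apply] at e0 e1 e2
    norm_num [Fin.ext_iff] at e0 e1 e2
    rw [e0, e1, e2]
    have hsplit : ((c * Real.cos (q 2) : ℝ), (c * Real.sin (q 2) : ℝ))
        = (c * Real.cos (q 2)) • ((1 : ℝ), (0 : ℝ)) + (c * Real.sin (q 2)) • ((0 : ℝ), (1 : ℝ)) := by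
      simp [Prod.ext_iff]
    rw [hsplit, map_add, map_smul, map_smul, smul_eq_mul, smul_eq_mul]
    have hMm : M + m ≠ 0 := by positivity
    have hcc : (M + m) * c = m * l₃ := by
      rw [hc]; field_simp
    linear_combination (Real.cos (q 2) * (fderiv ℝ φ (g q)) (1, 0)
      + Real.sin (q 2) * (fderiv ℝ φ (g q)) (0, 1)) * hcc
end

section
/- Let φ : ℝ → ℝ be differentiable and define V_d : ℝ × (−π/2, π/2) → ℝ by V_d(q₁, q₂) = φ( −(8/9)·ln( (1 + sin q₂)/cos q₂ ) + q₂/3 − q₁ ). Then V_d satisfies the homogeneous first-order PDE (4 − 1.5 cos q₂) · ∂V_d/∂q₁ − 4.5 cos q₂ · ∂V_d/∂q₂ = 0 for all q₁ ∈ ℝ and q₂ ∈ (−π/2, π/2). -/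
open Real

/-- Homogeneous solution of the potential-energy matching PDE (54) for the pendubot. -/
theorem pendubot_homogeneous_solution (φ : ℝ → ℝ) (hφ : Differentiable ℝ φ)
    (Vd : ℝ → ℝ → ℝ)
    (hVd : Vd = fun q₁ q₂ =>
      φ (-(8 / 9) * Real.log ((1 + Real.sin q₂) / Real.cos q₂) + q₂ / 3 - q₁)) :
    ∀ q₁ q₂ : ℝ, q₂ ∈ Set.Ioo (-(π / 2)) (π / 2) →
      (4 - 1.5 * Real.cos q₂) * deriv (fun x => Vd x q₂) q₁
        - 4.5 * Real.cos q₂ * deriv (fun y => Vd q₁ y) q₂ = 0 := by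
  subst hVd
  intro q₁ q₂ hq₂
  have hc : 0 < Real.cos q₂ := Real.cos_pos_of_mem_Ioo hq₂
  have hs : -1 < Real.sin q₂ := by
    nlinarith [Real.sin_sq_add_cos_sq q₂, Real.neg_one_le_sin q₂]
  have hs1 : (0:ℝ) < 1 + Real.sin q₂ := by linarith
  set u : ℝ := -(8 / 9) * Real.log ((1 + Real.sin q₂) / Real.cos q₂) + q₂ / 3 - q₁ with hu
  -- derivative in q₁
  have h1 : HasDerivAt (fun x => φ (-(8 / 9) * Real.log ((1 + Real.sin q₂) / Real.cos q₂) + q₂ / 3 - x))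
      (deriv φ u * (-1)) q₁ := by
    have hin : HasDerivAt (fun x : ℝ => -(8 / 9) * Real.log ((1 + Real.sin q₂) / Real.cos q₂) + q₂ / 3 - x)
        (-1) q₁ := (hasDerivAt_id q₁).const_sub _
    exact ((hφ u).hasDerivAt).comp q₁ hin
  -- derivative in q₂
  have hnum : HasDerivAt (fun y => 1 + Real.sin y) (Real.cos q₂) q₂ :=
    (Real.hasDerivAt_sin q₂).const_add 1
  have hq : HasDerivAt (fun y => (1 + Real.sin y) / Real.cos y)
      ((Real.cos q₂ * Real.cos q₂ - (1 + Real.sin q₂) * (-Real.sin q₂)) / Real.cos q₂ ^ 2) q₂ :=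
    hnum.div (Real.hasDerivAt_cos q₂) hc.ne'
  have hlog := hq.log (ne_of_gt (div_pos hs1 hc))
  have hin2 : HasDerivAt (fun y => -(8 / 9) * Real.log ((1 + Real.sin y) / Real.cos y) + y / 3 - q₁)
      (-(8 / 9) * ((Real.cos q₂ * Real.cos q₂ - (1 + Real.sin q₂) * (-Real.sin q₂)) / Real.cos q₂ ^ 2
        / ((1 + Real.sin q₂) / Real.cos q₂)) + 1 / 3) q₂ := by
    have := ((hlog.const_mul (-(8 / 9))).add ((hasDerivAt_id q₂).div_const 3)).sub_const q₁
    simpa using this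
  have h2 : HasDerivAt (fun y => φ (-(8 / 9) * Real.log ((1 + Real.sin y) / Real.cos y) + y / 3 - q₁))
      (deriv φ u * (-(8 / 9) * ((Real.cos q₂ * Real.cos q₂ - (1 + Real.sin q₂) * (-Real.sin q₂)) / Real.cos q₂ ^ 2
        / ((1 + Real.sin q₂) / Real.cos q₂)) + 1 / 3)) q₂ :=
    ((hφ u).hasDerivAt).comp q₂ hin2
  rw [h1.deriv, h2.deriv]
  have pyth := Real.sin_sq_add_cos_sq q₂
  field_simp
  linear_combination (108 * deriv φ u) * pyth
end
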